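/- For every x in the ℂ-linear span of {e₀, …, e_ℓ, w₁, …, w_{ℓ−1}} and every integer n ≥ 0, one has λ(x·ρⁿ)·τ(ρ) = n·τ(x·ρⁿ)·λ(ρ). (This is the relation λ(xρⁿ)/λ(ρ) = n·τ(xρⁿ)/τ(ρ) in cross-multiplied form; it holds for both choices of the sign σ.) -/

import Mathlib

noncomputable section
namespace RestrictedQsl2

/-- `t = exp(πi/ℓ)`. -/
def tval (ℓ : ℕ) : ℂ := Complex.exp (Real.pi * Complex.I / ℓ)

/-- `s = exp(πi/(2ℓ))`, so `s² = t`. -/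
def sval (ℓ : ℕ) : ℂ := Complex.exp (Real.pi * Complex.I / (2 * ℓ))

/-- Quantum integer `[n]`. -/
def qint (ℓ n : ℕ) : ℂ := (tval ℓ ^ n - (tval ℓ)⁻¹ ^ n) / (tval ℓ - (tval ℓ)⁻¹)

/-- Quantum factorial `[n]!`. -/
def qfact (ℓ n : ℕ) : ℂ := ∏ k ∈ Finset.range n, qint ℓ (k + 1)

/-- `a_m = (−1)^{m+1} s^{σ(1−m²)}`. -/
def am (ℓ : ℕ) (σ : ℤ) (m : ℕ) : ℂ := (-1) ^ (m + 1) * sval ℓ ^ (σ * (1 - (m : ℤ) ^ 2))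

/-- `b_m = σ(−1)^{ℓ−1}(t−t⁻¹) s^{σ(1−m²)} m/[m]`. -/
def bm (ℓ : ℕ) (σ : ℤ) (m : ℕ) : ℂ :=
  (σ : ℂ) * (-1) ^ (ℓ - 1) * (tval ℓ - (tval ℓ)⁻¹) * sval ℓ ^ (σ * (1 - (m : ℤ) ^ 2)) *
    (m : ℂ) / qint ℓ m

/-- `c_m = −ℓ·b_m/m`. -/
def cm (ℓ : ℕ) (σ : ℤ) (m : ℕ) : ℂ := -(ℓ : ℂ) * bm ℓ σ m / (m : ℂ)

/-- The ribbon element `ρ = Σ aₘ eₘ + Σ(bₘ wₘ + cₘ wₘ⁺)`, `wₘ = wₘ⁺ + wₘ⁻`. -/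
def ribbon (ℓ : ℕ) (σ : ℤ) {A : Type*} [CommRing A] [Algebra ℂ A] (e wp wm : ℕ → A) : A :=
  ∑ m ∈ Finset.range (ℓ + 1), am ℓ σ m • e m +
    ∑ m ∈ Finset.Icc 1 (ℓ - 1), (bm ℓ σ m • (wp m + wm m) + cm ℓ σ m • wp m)

lemma tpow (ℓ : ℕ) (hℓ : 0 < ℓ) : tval ℓ ^ ℓ = -1 := by
  have h : (ℓ:ℂ) ≠ 0 := Nat.cast_ne_zero.mpr hℓ.ne'
  rw [tval, ← Complex.exp_nat_mul]
  rw [show (ℓ:ℂ) * (↑Real.pi * Complex.I / ↑ℓ) = ↑Real.pi * Complex.I by field_simp]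
  exact Complex.exp_pi_mul_I

lemma qint_zero' (ℓ : ℕ) : qint ℓ 0 = 0 := by simp [qint]

lemma qint_ell (ℓ : ℕ) (hℓ : 0 < ℓ) : qint ℓ ℓ = 0 := by
  have h := tpow ℓ hℓ
  have h2 : (tval ℓ)⁻¹ ^ ℓ = -1 := by rw [inv_pow, h]; norm_num
  rw [qint, h, h2]; simp

def Kc (ℓ : ℕ) (σ : ℤ) : ℂ :=
  -(σ:ℂ) * (-1)^(ℓ-1) * (tval ℓ - (tval ℓ)⁻¹) * ((tval ℓ)⁻¹)^2 / (2 * qfact ℓ (ℓ-1)^2)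

lemma key (ℓ : ℕ) (hℓ : 1 < ℓ) (σ : ℤ) (j : ℕ) (hj : 1 ≤ j) :
    cm ℓ σ j * ((-1:ℂ)^(j-1) * ((tval ℓ)⁻¹)^2 * qint ℓ j^3 / (2*(ℓ:ℂ)*qfact ℓ (ℓ-1)^2))
      = Kc ℓ σ * (am ℓ σ j * qint ℓ j ^ 2) := by
  by_cases hq : qint ℓ j = 0
  · simp [cm, bm, hq]
  by_cases hf : qfact ℓ (ℓ-1) = 0
  · simp [Kc, hf]
  have hjc : (j:ℂ) ≠ 0 := Nat.cast_ne_zero.mpr (by omega)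
  have hlc : (ℓ:ℂ) ≠ 0 := Nat.cast_ne_zero.mpr (by omega)
  have hsign : (-1:ℂ)^(j+1) = (-1)^(j-1) := by
    rw [show j+1 = (j-1)+2 by omega, pow_add]; ring
  have hcm : cm ℓ σ j = -(ℓ:ℂ) * ((σ:ℂ) * (-1)^(ℓ-1) * (tval ℓ - (tval ℓ)⁻¹) *
      sval ℓ ^ (σ * (1 - (j:ℤ)^2))) / qint ℓ j := by
    rw [cm, bm]; field_simp
  have h1 : qint ℓ j * (2*(ℓ:ℂ)*qfact ℓ (ℓ-1)^2) ≠ 0 := by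
    apply mul_ne_zero hq
    apply mul_ne_zero (mul_ne_zero two_ne_zero hlc) (pow_ne_zero _ hf)
  have h2 : (2 * qfact ℓ (ℓ-1)^2 : ℂ) ≠ 0 := mul_ne_zero two_ne_zero (pow_ne_zero _ hf)
  rw [hcm, am, Kc, hsign, div_mul_div_comm, div_mul_eq_mul_div, div_eq_div_iff h1 h2]
  ring

/-- With `ρ` the ribbon element, `λ` the left integral and `τ` the
quantum trace, for every `x` in the span of the `eₘ` and the `wₘ = wₘ⁺ + wₘ⁻` and every
`n ≥ 0`:  `λ(xρⁿ)·τ(ρ) = n·τ(xρⁿ)·λ(ρ)`. -/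
theorem integral_trace_relation (ℓ : ℕ) (hℓ : 1 < ℓ) (σ : ℤ) (hσ : σ = 1 ∨ σ = -1)
    (A : Type*) [CommRing A] [Algebra ℂ A]
    (e wp wm : ℕ → A)
    (hee : ∀ i ≤ ℓ, ∀ j ≤ ℓ, e i * e j = if i = j then e i else 0)
    (hewp : ∀ i ≤ ℓ, ∀ j, 1 ≤ j → j ≤ ℓ - 1 → e i * wp j = if i = j then wp j else 0)
    (hewm : ∀ i ≤ ℓ, ∀ j, 1 ≤ j → j ≤ ℓ - 1 → e i * wm j = if i = j then wm j else 0)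
    (hww : ∀ i, 1 ≤ i → i ≤ ℓ - 1 → ∀ j, 1 ≤ j → j ≤ ℓ - 1 →
      wp i * wp j = 0 ∧ wp i * wm j = 0 ∧ wm i * wp j = 0 ∧ wm i * wm j = 0)
    (lam tau : A →ₗ[ℂ] ℂ)
    (hlame : ∀ m ≤ ℓ, lam (e m) = 0)
    (hlamwp : ∀ m, 1 ≤ m → m ≤ ℓ - 1 →
      lam (wp m) =
        (-1 : ℂ) ^ (m - 1) * ((tval ℓ)⁻¹) ^ 2 * qint ℓ m ^ 3 /
          (2 * (ℓ : ℂ) * qfact ℓ (ℓ - 1) ^ 2))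
    (hlamwm : ∀ m, 1 ≤ m → m ≤ ℓ - 1 → lam (wm m) = -lam (wp m))
    (htaue : ∀ m ≤ ℓ, tau (e m) = qint ℓ m ^ 2)
    (htauwp : ∀ m, 1 ≤ m → m ≤ ℓ - 1 → tau (wp m) = 0)
    (htauwm : ∀ m, 1 ≤ m → m ≤ ℓ - 1 → tau (wm m) = 0) :
    ∀ x ∈ Submodule.span ℂ
        ({z : A | ∃ m ≤ ℓ, z = e m} ∪
          {z : A | ∃ m, 1 ≤ m ∧ m ≤ ℓ - 1 ∧ z = wp m + wm m}),
      ∀ n : ℕ,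
        lam (x * ribbon ℓ σ e wp wm ^ n) * tau (ribbon ℓ σ e wp wm) =
          (n : ℂ) * tau (x * ribbon ℓ σ e wp wm ^ n) * lam (ribbon ℓ σ e wp wm) := by
  have hℓ0 : 0 < ℓ := by omega
  set r : A := ribbon ℓ σ e wp wm with hrdef
  set d : ℕ → A := fun j => if j ∈ Finset.Icc 1 (ℓ-1) then
      bm ℓ σ j • (wp j + wm j) + cm ℓ σ j • wp j else 0 with hd
  -- products with r
  have hPr : ∀ j, 1 ≤ j → j ≤ ℓ - 1 → wp j * r = am ℓ σ j • wp j := by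
    intro j h1 h2
    rw [hrdef, ribbon, mul_add, Finset.mul_sum, Finset.mul_sum]
    have e1 : ∀ m ∈ Finset.range (ℓ+1), wp j * (am ℓ σ m • e m)
        = if m = j then am ℓ σ j • wp j else 0 := by
      intro m hm
      rw [Finset.mem_range] at hm
      rw [mul_smul_comm, mul_comm (wp j) (e m), hewp m (by omega) j h1 h2]
      by_cases h : m = j
      · subst h; simp
      · simp [h]
    have e2 : ∀ m ∈ Finset.Icc 1 (ℓ-1),
        wp j * (bm ℓ σ m • (wp m + wm m) + cm ℓ σ m • wp m) = 0 := by
      intro m hm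
      rw [Finset.mem_Icc] at hm
      obtain ⟨q1, q2, q3, q4⟩ := hww j h1 h2 m hm.1 hm.2
      simp [mul_add, mul_smul_comm, q1, q2]
    rw [Finset.sum_congr rfl e1, Finset.sum_ite_eq' (Finset.range (ℓ+1)) j,
      Finset.sum_eq_zero e2]
    have : j ∈ Finset.range (ℓ+1) := Finset.mem_range.mpr (by omega)
    simp [this]
  have hMr : ∀ j, 1 ≤ j → j ≤ ℓ - 1 → wm j * r = am ℓ σ j • wm j := by
    intro j h1 h2
    rw [hrdef, ribbon, mul_add, Finset.mul_sum, Finset.mul_sum]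
    have e1 : ∀ m ∈ Finset.range (ℓ+1), wm j * (am ℓ σ m • e m)
        = if m = j then am ℓ σ j • wm j else 0 := by
      intro m hm
      rw [Finset.mem_range] at hm
      rw [mul_smul_comm, mul_comm (wm j) (e m), hewm m (by omega) j h1 h2]
      by_cases h : m = j
      · subst h; simp
      · simp [h]
    have e2 : ∀ m ∈ Finset.Icc 1 (ℓ-1),
        wm j * (bm ℓ σ m • (wp m + wm m) + cm ℓ σ m • wp m) = 0 := by
      intro m hm
      rw [Finset.mem_Icc] at hm
      obtain ⟨q1, q2, q3, q4⟩ := hww j h1 h2 m hm.1 hm.2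
      simp [mul_add, mul_smul_comm, q3, q4]
    rw [Finset.sum_congr rfl e1, Finset.sum_ite_eq' (Finset.range (ℓ+1)) j,
      Finset.sum_eq_zero e2]
    have : j ∈ Finset.range (ℓ+1) := Finset.mem_range.mpr (by omega)
    simp [this]
  have hEr : ∀ j ≤ ℓ, e j * r = am ℓ σ j • e j + d j := by
    intro j hj
    rw [hrdef, ribbon, mul_add, Finset.mul_sum, Finset.mul_sum]
    have e1 : ∀ m ∈ Finset.range (ℓ+1), e j * (am ℓ σ m • e m)
        = if m = j then am ℓ σ j • e j else 0 := by
      intro m hm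
      rw [Finset.mem_range] at hm
      rw [mul_smul_comm, hee j hj m (by omega)]
      by_cases h : m = j
      · subst h; simp
      · simp [h, Ne.symm h]
    have e2 : ∀ m ∈ Finset.Icc 1 (ℓ-1),
        e j * (bm ℓ σ m • (wp m + wm m) + cm ℓ σ m • wp m)
          = if m = j then bm ℓ σ j • (wp j + wm j) + cm ℓ σ j • wp j else 0 := by
      intro m hm
      rw [Finset.mem_Icc] at hm
      rw [mul_add, mul_smul_comm, mul_smul_comm, mul_add,
        hewp j hj m hm.1 hm.2, hewm j hj m hm.1 hm.2]
      by_cases h : m = j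
      · subst h; simp
      · simp [h, Ne.symm h]
    rw [Finset.sum_congr rfl e1, Finset.sum_ite_eq' (Finset.range (ℓ+1)) j,
      Finset.sum_congr rfl e2, Finset.sum_ite_eq' (Finset.Icc 1 (ℓ-1)) j]
    have : j ∈ Finset.range (ℓ+1) := Finset.mem_range.mpr (by omega)
    rw [if_pos this]
  have hDr : ∀ j, d j * r = am ℓ σ j • d j := by
    intro j
    simp only [hd]
    by_cases h : j ∈ Finset.Icc 1 (ℓ-1)
    · rw [if_pos h]
      rw [Finset.mem_Icc] at h
      simp only [add_mul, smul_mul_assoc, hPr j h.1 h.2, hMr j h.1 h.2]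
      module
    · rw [if_neg h]; simp
  have hEn : ∀ j ≤ ℓ, ∀ k : ℕ, e j * r^(k+1)
      = (am ℓ σ j)^(k+1) • e j + (((k:ℂ)+1) * (am ℓ σ j)^k) • d j := by
    intro j hj k
    induction k with
    | zero => rw [pow_one, hEr j hj]; simp
    | succ k ih =>
      rw [pow_succ, ← mul_assoc, ih, add_mul, smul_mul_assoc, smul_mul_assoc,
        hEr j hj, hDr j]
      rw [smul_add]
      push_cast
      module
  have hWn : ∀ j, 1 ≤ j → j ≤ ℓ - 1 → ∀ n : ℕ,
      (wp j + wm j) * r^n = (am ℓ σ j)^n • (wp j + wm j) := by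
    intro j h1 h2 n
    induction n with
    | zero => simp
    | succ n ih =>
      rw [pow_succ, ← mul_assoc, ih, smul_mul_assoc, add_mul, hPr j h1 h2,
        hMr j h1 h2, ← smul_add, smul_smul, ← pow_succ]
  -- values of lam and tau
  have hlamd : ∀ j, lam (d j)
      = if j ∈ Finset.Icc 1 (ℓ-1) then Kc ℓ σ * (am ℓ σ j * qint ℓ j ^ 2) else 0 := by
    intro j
    simp only [hd]
    by_cases h : j ∈ Finset.Icc 1 (ℓ-1)
    · rw [if_pos h, if_pos h]
      rw [Finset.mem_Icc] at h
      rw [map_add, map_smul, map_smul, map_add, hlamwm j h.1 h.2, smul_eq_mul,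
        smul_eq_mul, hlamwp j h.1 h.2]
      rw [← key ℓ hℓ σ j h.1]
      ring
    · rw [if_neg h, if_neg h, map_zero]
  have htaud : ∀ j, tau (d j) = 0 := by
    intro j
    simp only [hd]
    by_cases h : j ∈ Finset.Icc 1 (ℓ-1)
    · rw [if_pos h]
      rw [Finset.mem_Icc] at h
      rw [map_add, map_smul, map_smul, map_add, htauwp j h.1 h.2, htauwm j h.1 h.2]
      simp
    · rw [if_neg h, map_zero]
  have htaur : tau r = ∑ m ∈ Finset.Icc 1 (ℓ-1), am ℓ σ m * qint ℓ m ^ 2 := by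
    rw [hrdef, ribbon, map_add, map_sum, map_sum]
    have e2 : ∀ m ∈ Finset.Icc 1 (ℓ-1),
        tau (bm ℓ σ m • (wp m + wm m) + cm ℓ σ m • wp m) = 0 := by
      intro m hm
      rw [Finset.mem_Icc] at hm
      rw [map_add, map_smul, map_smul, map_add, htauwp m hm.1 hm.2,
        htauwm m hm.1 hm.2]
      simp
    rw [Finset.sum_eq_zero e2, add_zero]
    have e1 : ∀ m ∈ Finset.range (ℓ+1), tau (am ℓ σ m • e m) = am ℓ σ m * qint ℓ m ^ 2 := by
      intro m hm
      rw [Finset.mem_range] at hm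
      rw [map_smul, smul_eq_mul, htaue m (by omega)]
    rw [Finset.sum_congr rfl e1]
    refine (Finset.sum_subset ?_ ?_).symm
    · intro m hm
      rw [Finset.mem_Icc] at hm
      exact Finset.mem_range.mpr (by omega)
    · intro m hm hm'
      rw [Finset.mem_range] at hm
      rw [Finset.mem_Icc] at hm'
      have : m = 0 ∨ m = ℓ := by omega
      rcases this with h | h
      · rw [h, qint_zero']; ring
      · rw [h, qint_ell ℓ hℓ0]; ring
  have hlamr : lam r = Kc ℓ σ * tau r := by
    rw [htaur, hrdef, ribbon, map_add, map_sum, map_sum]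
    have e1 : ∀ m ∈ Finset.range (ℓ+1), lam (am ℓ σ m • e m) = 0 := by
      intro m hm
      rw [Finset.mem_range] at hm
      rw [map_smul, hlame m (by omega), smul_zero]
    have e2 : ∀ m ∈ Finset.Icc 1 (ℓ-1),
        lam (bm ℓ σ m • (wp m + wm m) + cm ℓ σ m • wp m)
          = Kc ℓ σ * (am ℓ σ m * qint ℓ m ^ 2) := by
      intro m hm
      rw [Finset.mem_Icc] at hm
      rw [map_add, map_smul, map_smul, map_add, hlamwm m hm.1 hm.2, smul_eq_mul,
        smul_eq_mul, hlamwp m hm.1 hm.2, ← key ℓ hℓ σ m hm.1]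
      ring
    rw [Finset.sum_eq_zero e1, zero_add, Finset.sum_congr rfl e2, ← Finset.mul_sum]
  -- main induction
  intro x hx
  induction hx using Submodule.span_induction with
  | zero => intro n; simp
  | add x y hx hy ihx ihy =>
    intro n
    simp only [add_mul, map_add]
    linear_combination ihx n + ihy n
  | smul a x hx ih =>
    intro n
    simp only [smul_mul_assoc, map_smul, smul_eq_mul]
    linear_combination a * ih n
  | mem x h =>
    rcases h with h | h
    · obtain ⟨j, hj, rfl⟩ := h
      intro n
      cases n with
      | zero => simp [hlame j hj]
      | succ k =>
        rw [hEn j hj k, map_add, map_add, map_smul, map_smul, map_smul, map_smul,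
          hlame j hj, htaue j hj, htaud j, hlamd j, hlamr]
        by_cases hjI : j ∈ Finset.Icc 1 (ℓ-1)
        · rw [if_pos hjI]
          push_cast
          simp only [smul_eq_mul]
          ring
        · rw [if_neg hjI]
          have hq : qint ℓ j = 0 := by
            rw [Finset.mem_Icc] at hjI
            have : j = 0 ∨ j = ℓ := by omega
            rcases this with h | h
            · rw [h]; exact qint_zero' ℓ
            · rw [h]; exact qint_ell ℓ hℓ0
          rw [hq]
          simp
    · obtain ⟨j, h1, h2, rfl⟩ := h
      intro n
      rw [hWn j h1 h2 n, map_smul, map_smul, smul_eq_mul, smul_eq_mul]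
      have lw : lam (wp j + wm j) = 0 := by
        rw [map_add, hlamwm j h1 h2]; ring
      have tw : tau (wp j + wm j) = 0 := by
        rw [map_add, htauwp j h1 h2, htauwm j h1 h2]; ring
      rw [lw, tw]
      ring


end RestrictedQsl2
end
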